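/- Let l be a convex loss function (convex in its first argument), let p_1, ..., p_K be probability densities on X with mixture p = Σ_k π_k p_k where π_k ≥ 0 and Σ_k π_k = 1, and let h_1, ..., h_K be hypotheses. Define weight functions w_k*(x) = π_k p_k(x)/Σ_i π_i p_i(x) (on points where the denominator is positive). Then the expected loss of the ensemble satisfies L_p(Σ_k w_k*·h_k) ≤ Σ_k π_k · L_{p_k}(h_k), where L_q(h) = E_{x~q}[l(h(x), y(x))] for a fixed labeling function y. -/

import Mathlib

open MeasureTheory

/-- Optimal-weight ensemble loss bound: with weights `w_k*(x) = π k * p k x / ∑ i, π i * p i x`,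
the expected loss of the ensemble over the mixture `p = ∑ k, π k * p k` is at most
`∑ k, π k * L_{p_k}(h_k)`, for a loss `l` that is convex in its first argument. -/
theorem ensemble_loss_le_weighted_client_losses
    {X : Type*} [MeasurableSpace X] (μ : Measure X) (K : ℕ)
    (p : Fin K → X → ℝ) (π : Fin K → ℝ) (h : Fin K → X → ℝ) (y : X → ℝ)
    (l : ℝ → ℝ → ℝ)
    (hp : ∀ k x, 0 ≤ p k x) (hπ : ∀ k, 0 ≤ π k) (hπ1 : ∑ k, π k = 1)
    (hl : ∀ u v, 0 ≤ l u v)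
    (hconv : ∀ (v : ℝ) (n : ℕ) (lam u : Fin n → ℝ), (∀ i, 0 ≤ lam i) → (∑ i, lam i) = 1 →
      l (∑ i, lam i * u i) v ≤ ∑ i, lam i * l (u i) v)
    (hint1 : Integrable (fun x =>
      l (∑ k, (π k * p k x / ∑ i, π i * p i x) * h k x) (y x) * (∑ k, π k * p k x)) μ)
    (hint2 : ∀ k, Integrable (fun x => l (h k x) (y x) * p k x) μ) :
    (∫ x, l (∑ k, (π k * p k x / ∑ i, π i * p i x) * h k x) (y x) * (∑ k, π k * p k x) ∂μ)
      ≤ ∑ k, π k * ∫ x, l (h k x) (y x) * p k x ∂μ := by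
  have hrint : Integrable (fun x => ∑ k, π k * (l (h k x) (y x) * p k x)) μ :=
    integrable_finset_sum _ fun k _ => ((hint2 k).const_mul (π k))
  have key : ∀ x, l (∑ k, (π k * p k x / ∑ i, π i * p i x) * h k x) (y x) * (∑ k, π k * p k x)
      ≤ ∑ k, π k * (l (h k x) (y x) * p k x) := by
    intro x
    set S := ∑ i, π i * p i x with hS
    have hS0 : 0 ≤ S := Finset.sum_nonneg fun i _ => mul_nonneg (hπ i) (hp i x)
    rcases eq_or_lt_of_le hS0 with hz | hpos
    · rw [← hz, mul_zero]
      exact Finset.sum_nonneg fun k _ => mul_nonneg (hπ k)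
        (mul_nonneg (hl _ _) (hp k x))
    · have hlam : ∀ k, 0 ≤ π k * p k x / S :=
        fun k => div_nonneg (mul_nonneg (hπ k) (hp k x)) hS0
      have hsum1 : (∑ k, π k * p k x / S) = 1 := by
        rw [← Finset.sum_div, ← hS, div_self (ne_of_gt hpos)]
      have := hconv (y x) K (fun k => π k * p k x / S) (fun k => h k x) hlam hsum1
      calc l (∑ k, (π k * p k x / S) * h k x) (y x) * S
          ≤ (∑ k, (π k * p k x / S) * l (h k x) (y x)) * S := by
            exact mul_le_mul_of_nonneg_right this hS0
        _ = ∑ k, π k * (l (h k x) (y x) * p k x) := by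
            rw [Finset.sum_mul]
            refine Finset.sum_congr rfl fun k _ => ?_
            field_simp
  calc (∫ x, l (∑ k, (π k * p k x / ∑ i, π i * p i x) * h k x) (y x) * (∑ k, π k * p k x) ∂μ)
      ≤ ∫ x, ∑ k, π k * (l (h k x) (y x) * p k x) ∂μ :=
        integral_mono hint1 hrint key
    _ = ∑ k, π k * ∫ x, l (h k x) (y x) * p k x ∂μ := by
        rw [integral_finset_sum _ fun k _ => (hint2 k).const_mul (π k)]
        exact Finset.sum_congr rfl fun k _ => integral_const_mul _ _
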